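/- Let A, B ⊆ [m] with A ∪ B ≠ ∅ and D = Δ_A + wΔ_B ⊆ F_4^m. The binary subfield code C^{(2)}_{D^*} — whose codewords are the tuples c^{(2)}(α,β) = (α·d_2 + β·(d_1+d_2)) indexed by the pairs (d_1,d_2) ∈ (Δ_A × Δ_B) \ {(0,0)}, for α, β ∈ F_2^m — has length 2^{|A|+|B|} − 1, exactly 2^{|A|+|B|} distinct codewords (dimension |A|+|B| over F_2), and every nonzero codeword has Hamming weight exactly 2^{|A|+|B|−1}. Explicitly, wt(c^{(2)}(α,β)) = 2^{|A|+|B|−1}·(1 − ψ(β|A)·ψ(α+β|B)) for all α, β ∈ F_2^m. -/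

import Mathlib

open Finset

/-- The support of a binary vector, as a finset of coordinates. -/
def supp {m : ℕ} (v : Fin m → ZMod 2) : Finset (Fin m) :=
  Finset.univ.filter (fun i => v i ≠ 0)

/-- The inner product of two binary vectors. -/
def dot2 {m : ℕ} (u v : Fin m → ZMod 2) : ZMod 2 := ∑ i, u i * v i

/-- The simplicial complex generated by `A`: all binary vectors with support contained in `A`. -/
def delta {m : ℕ} (A : Finset (Fin m)) : Finset (Fin m → ZMod 2) :=
  Finset.univ.filter (fun v => supp v ⊆ A)

/-- The codeword `c^{(2)}(α,β)` of the binary subfield code, indexed by the pairs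
`(d_1,d_2) ∈ (Δ_A × Δ_B) \ {(0,0)}`. -/
def cw2 {m : ℕ} (E : Finset ((Fin m → ZMod 2) × (Fin m → ZMod 2)))
    (α β : Fin m → ZMod 2) : {p // p ∈ E} → ZMod 2 :=
  fun p => dot2 α p.1.2 + dot2 β (p.1.1 + p.1.2)

/-- The Hamming weight of the codeword `c^{(2)}(α,β)`. -/
def wt2 {m : ℕ} (E : Finset ((Fin m → ZMod 2) × (Fin m → ZMod 2)))
    (α β : Fin m → ZMod 2) : ℕ :=
  (E.filter (fun p => dot2 α p.2 + dot2 β (p.1 + p.2) ≠ 0)).card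

lemma mem_delta {m : ℕ} {A : Finset (Fin m)} {v : Fin m → ZMod 2} :
    v ∈ delta A ↔ supp v ⊆ A := by simp [delta]

lemma supp_subset_iff {m : ℕ} {A : Finset (Fin m)} {v : Fin m → ZMod 2} :
    supp v ⊆ A ↔ ∀ i, i ∉ A → v i = 0 := by
  constructor
  · intro h i hiA
    by_contra hv
    exact hiA (h (by simp [supp, hv]))
  · intro h i hi
    simp [supp] at hi
    by_contra hiA
    exact hi (h i hiA)

lemma zero_mem_delta {m : ℕ} (A : Finset (Fin m)) : (0 : Fin m → ZMod 2) ∈ delta A := by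
  simp [mem_delta, supp_subset_iff]

lemma add_self_fun {m : ℕ} (x : Fin m → ZMod 2) : x + x = 0 := by
  funext i
  have : ∀ a : ZMod 2, a + a = 0 := by decide
  exact this (x i)

lemma card_delta {m : ℕ} (A : Finset (Fin m)) : (delta A).card = 2 ^ A.card := by
  have h : (delta A).card = (Finset.univ : Finset (↥A → ZMod 2)).card := by
    refine Finset.card_nbij' (fun v => fun a => v a.1)
      (fun f => fun i => if h : i ∈ A then f ⟨i, h⟩ else 0) ?_ ?_ ?_ ?_
    · intro v _; exact Finset.mem_univ _
    · intro f _
      rw [Finset.mem_coe, mem_delta, supp_subset_iff]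
      intro i hiA; simp [hiA]
    · intro v hv
      funext i
      by_cases h : i ∈ A
      · simp [h]
      · simp only [dif_neg h]
        exact (supp_subset_iff.mp (mem_delta.mp hv) i h).symm
    · intro f _
      funext a
      simp [a.2]
  rw [h, Finset.card_univ, Fintype.card_fun]
  simp

lemma dot2_add_right {m : ℕ} (γ u v : Fin m → ZMod 2) :
    dot2 γ (u + v) = dot2 γ u + dot2 γ v := by
  simp only [dot2, Pi.add_apply, mul_add]
  rw [Finset.sum_add_distrib]

lemma dot2_add_left {m : ℕ} (γ δ v : Fin m → ZMod 2) :
    dot2 (γ + δ) v = dot2 γ v + dot2 δ v := by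
  simp only [dot2, Pi.add_apply, add_mul]
  rw [Finset.sum_add_distrib]

lemma dot2_zero_right {m : ℕ} (γ : Fin m → ZMod 2) : dot2 γ 0 = 0 := by
  simp [dot2]

lemma dot2_disj {m : ℕ} {γ : Fin m → ZMod 2} {A : Finset (Fin m)} {v : Fin m → ZMod 2}
    (h : supp γ ∩ A = ∅) (hv : supp v ⊆ A) : dot2 γ v = 0 := by
  apply Finset.sum_eq_zero
  intro i _
  by_cases hγ : γ i = 0
  · simp [hγ]
  · have hiγ : i ∈ supp γ := by simp [supp, hγ]
    have hiA : i ∉ A := fun hiA => by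
      have : i ∈ supp γ ∩ A := Finset.mem_inter.mpr ⟨hiγ, hiA⟩
      simp [h] at this
    have : v i = 0 := supp_subset_iff.mp hv i hiA
    simp [this]

lemma zmod2_cases (a : ZMod 2) : a = 0 ∨ a = 1 := by
  have : ∀ a : ZMod 2, a = 0 ∨ a = 1 := by decide
  exact this a

lemma zmod2_ne_zero {a : ZMod 2} (h : a ≠ 0) : a = 1 := by
  rcases zmod2_cases a with h0 | h1
  · exact absurd h0 h
  · exact h1

-- counting lemma, nondisjoint case
lemma count_ndisj {m : ℕ} {γ : Fin m → ZMod 2} {A : Finset (Fin m)}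
    (h : supp γ ∩ A ≠ ∅) (c : ZMod 2) :
    ((delta A).filter (fun v => dot2 γ v = c)).card = 2 ^ (A.card - 1) := by
  obtain ⟨i0, hi0⟩ := Finset.nonempty_iff_ne_empty.mpr h
  obtain ⟨hi0γ, hi0A⟩ := Finset.mem_inter.mp hi0
  set e : Fin m → ZMod 2 := fun i => if i = i0 then 1 else 0 with he
  have hesupp : supp e ⊆ A := by
    rw [supp_subset_iff]
    intro i hiA
    have : i ≠ i0 := fun hEq => hiA (hEq ▸ hi0A)
    simp [he, this]
  have hdot_e : dot2 γ e = 1 := by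
    have hγ1 : γ i0 = 1 := zmod2_ne_zero (by simpa [supp] using hi0γ)
    rw [dot2]
    rw [Finset.sum_eq_single i0]
    · simp [he, hγ1]
    · intro b _ hb; simp [he, hb]
    · intro hn; exact absurd (Finset.mem_univ i0) hn
  -- the two fibers have equal cardinality
  have hflip : ∀ c' : ZMod 2, ((delta A).filter (fun v => dot2 γ v = c')).card
      = ((delta A).filter (fun v => dot2 γ v = c' + 1)).card := by
    intro c'
    refine Finset.card_nbij' (fun v => v + e) (fun v => v + e) ?_ ?_ ?_ ?_
    · intro v hv
      rw [Finset.mem_coe, Finset.mem_filter] at hv ⊢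
      refine ⟨?_, ?_⟩
      · rw [mem_delta]
        intro i hi
        simp only [supp, Finset.mem_filter, Pi.add_apply] at hi
        by_cases hvi : v i = 0
        · have : e i ≠ 0 := by
            intro h0; exact hi.2 (by simp [hvi, h0])
          exact hesupp (by simp [supp, this])
        · exact mem_delta.mp hv.1 (by simp [supp, hvi])
      · rw [dot2_add_right, hv.2, hdot_e]
    · intro v hv
      rw [Finset.mem_coe, Finset.mem_filter] at hv ⊢
      refine ⟨?_, ?_⟩
      · rw [mem_delta]
        intro i hi
        simp only [supp, Finset.mem_filter, Pi.add_apply] at hi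
        by_cases hvi : v i = 0
        · have : e i ≠ 0 := by
            intro h0; exact hi.2 (by simp [hvi, h0])
          exact hesupp (by simp [supp, this])
        · exact mem_delta.mp hv.1 (by simp [supp, hvi])
      · rw [dot2_add_right, hv.2, hdot_e]
        rw [add_assoc]
        have : (1 : ZMod 2) + 1 = 0 := by decide
        rw [this, add_zero]
    · intro v _
      show v + e + e = v
      rw [add_assoc, add_self_fun, add_zero]
    · intro v _
      show v + e + e = v
      rw [add_assoc, add_self_fun, add_zero]
  have hA1 : 1 ≤ A.card := Finset.card_pos.mpr ⟨i0, hi0A⟩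
  have hsplit : ((delta A).filter (fun v => dot2 γ v = 0)).card
      + ((delta A).filter (fun v => dot2 γ v = 1)).card = 2 ^ A.card := by
    have hbase := Finset.card_filter_add_card_filter_not
      (s := delta A) (p := fun v => dot2 γ v = 0)
    have heq : (delta A).filter (fun v => ¬ (fun v => dot2 γ v = 0) v)
        = (delta A).filter (fun v => dot2 γ v = 1) := by
      apply Finset.filter_congr
      intro v _
      constructor
      · intro hv; exact zmod2_ne_zero hv
      · intro hv h0; rw [hv] at h0; exact absurd h0 (by decide)
    rw [heq] at hbase
    rw [hbase, card_delta]
  have h01 : ((delta A).filter (fun v => dot2 γ v = 0)).card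
      = ((delta A).filter (fun v => dot2 γ v = 1)).card := by
    have := hflip 0
    simpa using this
  have hval : ((delta A).filter (fun v => dot2 γ v = 1)).card = 2 ^ (A.card - 1) := by
    have h2 : 2 * ((delta A).filter (fun v => dot2 γ v = 1)).card = 2 ^ A.card := by
      omega
    have : (2:ℕ) ^ A.card = 2 * 2 ^ (A.card - 1) := by
      conv_lhs => rw [show A.card = (A.card - 1) + 1 by omega]
      rw [pow_succ]; ring
    omega
  rcases zmod2_cases c with hc | hc <;> subst hc
  · omega
  · exact hval

lemma count_disj {m : ℕ} {γ : Fin m → ZMod 2} {A : Finset (Fin m)}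
    (h : supp γ ∩ A = ∅) :
    ((delta A).filter (fun v => dot2 γ v = 1)).card = 0
    ∧ ((delta A).filter (fun v => dot2 γ v = 0)).card = 2 ^ A.card := by
  have hall : ∀ v ∈ delta A, dot2 γ v = 0 := fun v hv => dot2_disj h (mem_delta.mp hv)
  constructor
  · rw [Finset.card_eq_zero, Finset.filter_eq_empty_iff]
    intro v hv
    rw [hall v hv]
    decide
  · rw [← card_delta A]
    congr 1
    apply Finset.filter_true_of_mem hall

lemma cw_rewrite {m : ℕ} (α β d1 d2 : Fin m → ZMod 2) :
    dot2 α d2 + dot2 β (d1 + d2) = dot2 β d1 + dot2 (α + β) d2 := by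
  rw [dot2_add_right, dot2_add_left]
  ring

lemma wt2_formula {m : ℕ} (A B : Finset (Fin m)) (α β : Fin m → ZMod 2) :
    wt2 ((delta A ×ˢ delta B).erase (0, 0)) α β
      = 2 ^ (A.card + B.card - 1) *
        (1 - (if supp β ∩ A = ∅ then 1 else 0) *
          (if supp (α + β) ∩ B = ∅ then 1 else 0)) := by
  set γ := α + β with hγ
  rw [wt2, Finset.filter_erase]
  rw [Finset.erase_eq_of_notMem (by
    intro hmem
    have := (Finset.mem_filter.mp hmem).2
    simp [dot2_zero_right] at this)]
  have hpred : ∀ p ∈ delta A ×ˢ delta B,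
      (dot2 α p.2 + dot2 β (p.1 + p.2) ≠ 0) ↔ (dot2 β p.1 + dot2 γ p.2 = 1) := by
    intro p _
    rw [cw_rewrite α β p.1 p.2, ← hγ]
    constructor
    · intro h; exact zmod2_ne_zero h
    · intro h h0; rw [h] at h0; exact absurd h0 (by decide)
  rw [Finset.filter_congr hpred]
  rw [Finset.card_filter, Finset.sum_product]
  rw [← Finset.sum_filter_add_sum_filter_not (delta A) (fun d1 => dot2 β d1 = 0)]
  have h1 : ∑ d1 ∈ (delta A).filter (fun d1 => dot2 β d1 = 0),
      (∑ d2 ∈ delta B, if dot2 β d1 + dot2 γ d2 = 1 then (1:ℕ) else 0)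
      = ((delta A).filter (fun d1 => dot2 β d1 = 0)).card
        * ((delta B).filter (fun d2 => dot2 γ d2 = 1)).card := by
    rw [Finset.sum_congr rfl (fun d1 hd1 => ?_), Finset.sum_const, smul_eq_mul]
    rw [Finset.card_filter]
    apply Finset.sum_congr rfl
    intro d2 _
    have hb : dot2 β d1 = 0 := (Finset.mem_filter.mp hd1).2
    rw [hb, zero_add]
  have h2 : ∑ d1 ∈ (delta A).filter (fun d1 => ¬ dot2 β d1 = 0),
      (∑ d2 ∈ delta B, if dot2 β d1 + dot2 γ d2 = 1 then (1:ℕ) else 0)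
      = ((delta A).filter (fun d1 => dot2 β d1 = 1)).card
        * ((delta B).filter (fun d2 => dot2 γ d2 = 0)).card := by
    have hset : (delta A).filter (fun d1 => ¬ dot2 β d1 = 0)
        = (delta A).filter (fun d1 => dot2 β d1 = 1) := by
      apply Finset.filter_congr
      intro v _
      constructor
      · intro hv; exact zmod2_ne_zero hv
      · intro hv h0; rw [hv] at h0; exact absurd h0 (by decide)
    rw [hset]
    rw [Finset.sum_congr rfl (fun d1 hd1 => ?_), Finset.sum_const, smul_eq_mul]
    rw [Finset.card_filter]
    apply Finset.sum_congr rfl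
    intro d2 _
    have hb : dot2 β d1 = 1 := (Finset.mem_filter.mp hd1).2
    rw [hb]
    congr 1
    have : ∀ x : ZMod 2, ((1 + x = 1)) = (x = 0) := by decide
    exact this _
  rw [h1, h2]
  by_cases hβA : supp β ∩ A = ∅ <;> by_cases hγB : supp γ ∩ B = ∅
  · obtain ⟨hA1, hA0⟩ := count_disj hβA
    obtain ⟨hB1, hB0⟩ := count_disj hγB
    rw [hA1, hA0, hB1, hB0, if_pos hβA, if_pos hγB]
    ring
  · obtain ⟨hA1, hA0⟩ := count_disj hβA
    have hB1 := count_ndisj hγB (1 : ZMod 2)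
    rw [hA1, hA0, hB1, if_pos hβA, if_neg hγB]
    have hb : 1 ≤ B.card := by
      obtain ⟨i, hi⟩ := Finset.nonempty_iff_ne_empty.mpr hγB
      exact Finset.card_pos.mpr ⟨i, (Finset.mem_inter.mp hi).2⟩
    rw [show A.card + B.card - 1 = A.card + (B.card - 1) from by omega, pow_add]
    ring
  · have hA1 := count_ndisj hβA (1 : ZMod 2)
    have hA0 := count_ndisj hβA (0 : ZMod 2)
    obtain ⟨hB1, hB0⟩ := count_disj hγB
    rw [hA1, hA0, hB1, hB0, if_neg hβA, if_pos hγB]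
    have ha : 1 ≤ A.card := by
      obtain ⟨i, hi⟩ := Finset.nonempty_iff_ne_empty.mpr hβA
      exact Finset.card_pos.mpr ⟨i, (Finset.mem_inter.mp hi).2⟩
    rw [show A.card + B.card - 1 = (A.card - 1) + B.card from by omega, pow_add]
    ring
  · have hA1 := count_ndisj hβA (1 : ZMod 2)
    have hA0 := count_ndisj hβA (0 : ZMod 2)
    have hB1 := count_ndisj hγB (1 : ZMod 2)
    have hB0 := count_ndisj hγB (0 : ZMod 2)
    rw [hA1, hA0, hB1, hB0, if_neg hβA, if_neg hγB]
    have ha : 1 ≤ A.card := by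
      obtain ⟨i, hi⟩ := Finset.nonempty_iff_ne_empty.mpr hβA
      exact Finset.card_pos.mpr ⟨i, (Finset.mem_inter.mp hi).2⟩
    have hb : 1 ≤ B.card := by
      obtain ⟨i, hi⟩ := Finset.nonempty_iff_ne_empty.mpr hγB
      exact Finset.card_pos.mpr ⟨i, (Finset.mem_inter.mp hi).2⟩
    rw [show A.card + B.card - 1 = ((A.card - 1) + (B.card - 1)) + 1 from by omega,
      pow_succ, pow_add]
    ring

lemma add_self_gen {ι : Type*} (f : ι → ZMod 2) : f + f = 0 := by
  funext i
  have : ∀ a : ZMod 2, a + a = 0 := by decide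
  exact this (f i)

lemma supp_add_subset {m : ℕ} (x y : Fin m → ZMod 2) :
    supp (x + y) ⊆ supp x ∪ supp y := by
  intro i hi
  simp only [supp, Finset.mem_filter, Pi.add_apply] at hi
  rw [Finset.mem_union]
  by_cases hx : x i = 0
  · right
    have : y i ≠ 0 := fun h0 => hi.2 (by rw [hx, h0, add_zero])
    simp [supp, this]
  · left; simp [supp, hx]

lemma eq_zero_of_supp_subset_disj {m : ℕ} {A : Finset (Fin m)} {x : Fin m → ZMod 2}
    (hsub : supp x ⊆ A) (hdisj : supp x ∩ A = ∅) : x = 0 := by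
  funext i
  by_contra hx
  have hi : i ∈ supp x := by simp [supp]; exact fun h => hx (by simp [h])
  have : i ∈ supp x ∩ A := Finset.mem_inter.mpr ⟨hi, hsub hi⟩
  simp [hdisj] at this

lemma eq_of_add_eq_zero {m : ℕ} {x y : Fin m → ZMod 2} (h : x + y = 0) : x = y := by
  funext i
  have := congrFun h i
  have h2 : ∀ a b : ZMod 2, a + b = 0 → a = b := by decide
  exact h2 _ _ this

lemma cw2_zero_imp {m : ℕ} (A B : Finset (Fin m)) {α β : Fin m → ZMod 2}
    (h : cw2 ((delta A ×ˢ delta B).erase (0, 0)) α β = 0) :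
    supp β ∩ A = ∅ ∧ supp (α + β) ∩ B = ∅ := by
  have hwt : wt2 ((delta A ×ˢ delta B).erase (0, 0)) α β = 0 := by
    rw [wt2, Finset.card_eq_zero, Finset.filter_eq_empty_iff]
    intro p hp
    have := congrFun h ⟨p, hp⟩
    simp only [cw2, Pi.zero_apply] at this
    simp only [ne_eq, not_not]
    exact this
  rw [wt2_formula] at hwt
  have hpow : 0 < 2 ^ (A.card + B.card - 1) := Nat.pow_pos (by norm_num)
  by_cases h1 : supp β ∩ A = ∅ <;> by_cases h2 : supp (α + β) ∩ B = ∅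
  · exact ⟨h1, h2⟩
  · rw [if_pos h1, if_neg h2] at hwt; simp at hwt
  · rw [if_neg h1] at hwt; simp at hwt
  · rw [if_neg h1] at hwt; simp at hwt

lemma cw2_eq_zero_of_disj {m : ℕ} {A B : Finset (Fin m)} {α β : Fin m → ZMod 2}
    (h1 : supp β ∩ A = ∅) (h2 : supp (α + β) ∩ B = ∅) :
    cw2 ((delta A ×ˢ delta B).erase (0, 0)) α β = 0 := by
  funext p
  obtain ⟨⟨d1, d2⟩, hp⟩ := p
  have hmem := Finset.mem_of_mem_erase hp
  rw [Finset.mem_product] at hmem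
  show dot2 α d2 + dot2 β (d1 + d2) = 0
  rw [cw_rewrite]
  rw [dot2_disj h1 (mem_delta.mp hmem.1), dot2_disj h2 (mem_delta.mp hmem.2), add_zero]

lemma cw2_add {m : ℕ} (E : Finset ((Fin m → ZMod 2) × (Fin m → ZMod 2)))
    (α β α' β' : Fin m → ZMod 2) :
    cw2 E (α + α') (β + β') = cw2 E α β + cw2 E α' β' := by
  funext p
  show dot2 (α + α') p.1.2 + dot2 (β + β') (p.1.1 + p.1.2)
    = (dot2 α p.1.2 + dot2 β (p.1.1 + p.1.2)) + (dot2 α' p.1.2 + dot2 β' (p.1.1 + p.1.2))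
  rw [dot2_add_left, dot2_add_left]
  ring

lemma dot2_mask {m : ℕ} {A : Finset (Fin m)} (x v : Fin m → ZMod 2) (hv : supp v ⊆ A) :
    dot2 (fun i => if i ∈ A then x i else 0) v = dot2 x v := by
  apply Finset.sum_congr rfl
  intro i _
  by_cases h : i ∈ A
  · simp [h]
  · have : v i = 0 := supp_subset_iff.mp hv i h
    simp [this]

lemma mask_mem_delta {m : ℕ} (A : Finset (Fin m)) (x : Fin m → ZMod 2) :
    (fun i => if i ∈ A then x i else 0) ∈ delta A := by
  rw [mem_delta, supp_subset_iff]
  intro i hiA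
  simp [hiA]

lemma image_card_eq {m : ℕ} (A B : Finset (Fin m)) :
    (Finset.univ.image
        (fun ab : (Fin m → ZMod 2) × (Fin m → ZMod 2) =>
          cw2 ((delta A ×ˢ delta B).erase (0, 0)) ab.1 ab.2)).card
      = 2 ^ (A.card + B.card) := by
  set E := (delta A ×ˢ delta B).erase (0, 0) with hE
  set g : (Fin m → ZMod 2) × (Fin m → ZMod 2) → ({p // p ∈ E} → ZMod 2) :=
    fun vu => cw2 E (vu.1 + vu.2) vu.2 with hg
  have himg : Finset.univ.image
      (fun ab : (Fin m → ZMod 2) × (Fin m → ZMod 2) => cw2 E ab.1 ab.2)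
      = (delta B ×ˢ delta A).image g := by
    apply Finset.Subset.antisymm
    · intro c hc
      rw [Finset.mem_image] at hc
      obtain ⟨⟨α, β⟩, _, hab⟩ := hc
      rw [Finset.mem_image]
      refine ⟨(fun i => if i ∈ B then (α + β) i else 0, fun i => if i ∈ A then β i else 0),
        Finset.mem_product.mpr ⟨mask_mem_delta B (α + β), mask_mem_delta A β⟩, ?_⟩
      rw [← hab, hg]
      funext p
      obtain ⟨⟨d1, d2⟩, hp⟩ := p
      have hmem := Finset.mem_of_mem_erase hp
      rw [Finset.mem_product] at hmem
      show dot2 _ d2 + dot2 _ (d1 + d2) = dot2 α d2 + dot2 β (d1 + d2)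
      rw [cw_rewrite, cw_rewrite α β]
      rw [add_assoc, add_self_gen, add_zero]
      rw [dot2_mask β d1 (mem_delta.mp hmem.1), dot2_mask (α + β) d2 (mem_delta.mp hmem.2)]
    · intro c hc
      rw [Finset.mem_image] at hc
      obtain ⟨vu, _, hvu⟩ := hc
      rw [Finset.mem_image]
      exact ⟨(vu.1 + vu.2, vu.2), Finset.mem_univ _, hvu⟩
  rw [himg]
  rw [Finset.card_image_of_injOn]
  · rw [Finset.card_product, card_delta, card_delta, ← pow_add, Nat.add_comm]
  · intro p hp q hq heq
    rw [Finset.mem_coe, Finset.mem_product] at hp hq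
    have hzero : cw2 E ((p.1 + p.2) + (q.1 + q.2)) (p.2 + q.2) = 0 := by
      rw [cw2_add, hg] at *
      simp only at heq
      rw [heq]
      exact add_self_gen _
    obtain ⟨hA, hB⟩ := cw2_zero_imp A B hzero
    have hu : p.2 = q.2 := by
      apply eq_of_add_eq_zero
      apply eq_zero_of_supp_subset_disj _ hA
      exact (supp_add_subset _ _).trans
        (Finset.union_subset (mem_delta.mp hp.2) (mem_delta.mp hq.2))
    have hvv : (p.1 + p.2 + (q.1 + q.2)) + (p.2 + q.2) = p.1 + q.1 := by
      funext i
      show p.1 i + p.2 i + (q.1 i + q.2 i) + (p.2 i + q.2 i) = p.1 i + q.1 i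
      have : ∀ a b c d : ZMod 2, a + b + (c + d) + (b + d) = a + c := by decide
      exact this _ _ _ _
    rw [hvv] at hB
    have hv : p.1 = q.1 := by
      apply eq_of_add_eq_zero
      apply eq_zero_of_supp_subset_disj _ hB
      exact (supp_add_subset _ _).trans
        (Finset.union_subset (mem_delta.mp hp.1) (mem_delta.mp hq.1))
    exact Prod.ext hv hu


/-- Proposition 5.1: for `A ∪ B ≠ ∅` and `D = Δ_A + wΔ_B`, the binary subfield code
`C^{(2)}_{D^*}` is a `[2^{|A|+|B|}−1, |A|+|B|, 2^{|A|+|B|−1}]` one-weight binary code;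
explicitly `wt(c^{(2)}(α,β)) = 2^{|A|+|B|−1}(1 − ψ(β|A)ψ(α+β|B))`. -/
theorem binary_subfield_code_simplicial_pair {m : ℕ} (hm : 1 ≤ m)
    (A B : Finset (Fin m)) (hAB : (A ∪ B).Nonempty) :
    ((delta A ×ˢ delta B).erase (0, 0)).card = 2 ^ (A.card + B.card) - 1
    ∧ (Finset.univ.image
        (fun ab : (Fin m → ZMod 2) × (Fin m → ZMod 2) =>
          cw2 ((delta A ×ˢ delta B).erase (0, 0)) ab.1 ab.2)).card
      = 2 ^ (A.card + B.card)
    ∧ (∀ α β : Fin m → ZMod 2,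
        cw2 ((delta A ×ˢ delta B).erase (0, 0)) α β ≠ 0 →
        wt2 ((delta A ×ˢ delta B).erase (0, 0)) α β = 2 ^ (A.card + B.card - 1))
    ∧ (∀ α β : Fin m → ZMod 2,
        wt2 ((delta A ×ˢ delta B).erase (0, 0)) α β
          = 2 ^ (A.card + B.card - 1) *
            (1 - (if supp β ∩ A = ∅ then 1 else 0) *
              (if supp (α + β) ∩ B = ∅ then 1 else 0))) := by
  refine ⟨?_, image_card_eq A B, ?_, fun α β => wt2_formula A B α β⟩
  · rw [Finset.card_erase_of_mem (Finset.mem_product.mpr ⟨zero_mem_delta A, zero_mem_delta B⟩)]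
    rw [Finset.card_product, card_delta, card_delta, ← pow_add]
  · intro α β hne
    rw [wt2_formula]
    by_cases h1 : supp β ∩ A = ∅ <;> by_cases h2 : supp (α + β) ∩ B = ∅
    · exact absurd (cw2_eq_zero_of_disj h1 h2) hne
    · rw [if_pos h1, if_neg h2]; simp
    · rw [if_neg h1]; simp
    · rw [if_neg h1]; simp
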